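/- Let n ∈ ℕ and let W ⊆ W' ⊆ Fin n with w = #W and w' = #W'. Let s'' be the largest even natural number with (s'' : ℤ) ≤ 2w − w' − 1 (taking s'' = 0 if 2w − w' − 1 ≤ 0). Let I_n be the set of involutions of Fin n with no fixed point if n is even, and with exactly one fixed point if n is odd. Then (as an inequality of rationals) #{σ ∈ I_n : σ(W) ⊆ W'} · binom(n,s'')_odd ≤ #I_n · C(w, s''). Equivalently, for σ chosen uniformly at random from I_n, the probability that σ(W) ⊆ W' is at most C(w,s'')/binom(n,s'')_odd. -/

import Mathlib

set_option maxHeartbeats 1000000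

open scoped BigOperators

/-- The odd binomial coefficient `binom(n,t)_odd = ((n−1)(n−3)⋯(n−t+1))/((t−1)(t−3)⋯1)`,
for `t` even, where numerator and denominator each have `t/2` factors. -/
noncomputable def oddBinom (n t : ℕ) : ℚ :=
  (∏ i ∈ Finset.range (t / 2), ((n : ℚ) - (2 * i + 1))) /
    (∏ i ∈ Finset.range (t / 2), ((t : ℚ) - (2 * i + 1)))

/-- `σ` is a perfect matching of `Fin n` when `n` is even, and a near perfect matching
(an involution with exactly one fixed point) when `n` is odd. -/
def IsNearPerfectMatching {n : ℕ} (σ : Equiv.Perm (Fin n)) : Prop :=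
  σ * σ = 1 ∧ Nat.card {x : Fin n // σ x = x} = (if Even n then 0 else 1)

open Equiv Finset

noncomputable def F (m : ℕ) : ℕ :=
  Nat.card {σ : Equiv.Perm (Fin m) // IsNearPerfectMatching σ}

section Core

lemma permCongr_mul' {α β : Type*} (e : α ≃ β) (σ τ : Perm α) :
    e.permCongr σ * e.permCongr τ = e.permCongr (σ * τ) := by
  ext x; simp [Equiv.permCongr_apply, Perm.mul_apply]

lemma card_fixed_permCongr {α β : Type*} (e : α ≃ β) (σ : Perm α) :
    Nat.card {y : β // e.permCongr σ y = y} = Nat.card {x : α // σ x = x} := by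
  refine Nat.card_congr (Equiv.subtypeEquiv e.symm ?_)
  intro y
  simp only [Equiv.permCongr_apply]
  constructor
  · intro h
    have := congrArg e.symm h; simpa using this
  · intro h
    rw [h]; simp

lemma subtypePerm_invol {α : Type*} {p : α → Prop} (σ : Perm α)
    (h : ∀ x, p x ↔ p (σ x)) (hσ : σ * σ = 1) :
    σ.subtypePerm (fun x => (h x).symm) * σ.subtypePerm (fun x => (h x).symm) = 1 := by
  ext x
  simp only [Perm.mul_apply, Perm.subtypePerm_apply, Perm.one_apply]
  have := congrFun (congrArg (fun f : Perm α => f.toFun) hσ) x.1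
  simpa using this

lemma card_fixed_subtypePerm {α : Type*} {p : α → Prop} (σ : Perm α)
    (h : ∀ x, p x ↔ p (σ x)) :
    Nat.card {x : Subtype p // σ.subtypePerm (fun x => (h x).symm) x = x} =
      Nat.card {x : α // p x ∧ σ x = x} := by
  refine Nat.card_congr ⟨fun x => ⟨x.1.1, x.1.2, ?_⟩, fun x => ⟨⟨x.1, x.2.1⟩, ?_⟩, ?_, ?_⟩
  · exact congrArg Subtype.val x.2
  · exact Subtype.ext x.2.2
  · intro x; ext; rfl
  · intro x; rfl

/-- restriction of a permutation to an invariant finset, transported to `Fin s`. -/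
noncomputable def npmRestr {n s : ℕ} (S : Finset (Fin n)) (hc : S.card = s)
    (σ : Perm (Fin n)) (hinv : ∀ x, x ∈ S ↔ σ x ∈ S) : Perm (Fin s) :=
  (Finset.equivFinOfCardEq hc).permCongr (σ.subtypePerm (fun x => (hinv x).symm))

lemma npmRestr_invol {n s : ℕ} (S : Finset (Fin n)) (hc : S.card = s)
    (σ : Perm (Fin n)) (hinv : ∀ x, x ∈ S ↔ σ x ∈ S) (hσ : σ * σ = 1) :
    npmRestr S hc σ hinv * npmRestr S hc σ hinv = 1 := by
  rw [npmRestr, permCongr_mul', subtypePerm_invol σ hinv hσ]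
  ext x; simp

lemma card_fixed_npmRestr {n s : ℕ} (S : Finset (Fin n)) (hc : S.card = s)
    (σ : Perm (Fin n)) (hinv : ∀ x, x ∈ S ↔ σ x ∈ S) :
    Nat.card {y : Fin s // npmRestr S hc σ hinv y = y} =
      Nat.card {x : Fin n // x ∈ S ∧ σ x = x} := by
  rw [npmRestr, card_fixed_permCongr, card_fixed_subtypePerm σ hinv]

/-- reconstruct values on `S` from the transported restriction. -/
lemma npmRestr_inj {n s : ℕ} {S T : Finset (Fin n)} (hST : S = T)
    (hcS : S.card = s) (hcT : T.card = s) {σ τ : Perm (Fin n)}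
    (ha : ∀ x, x ∈ S ↔ σ x ∈ S) (hb : ∀ x, x ∈ T ↔ τ x ∈ T)
    (h : npmRestr S hcS σ ha = npmRestr T hcT τ hb) :
    ∀ x ∈ S, σ x = τ x := by
  subst hST
  intro x hx
  have := congrArg (fun ρ : Perm (Fin s) => ρ (Finset.equivFinOfCardEq hcS ⟨x, hx⟩)) h
  simp only [npmRestr, Equiv.permCongr_apply, Equiv.symm_apply_apply] at this
  have h2 := congrArg ((Finset.equivFinOfCardEq hcS).symm) this
  simp only [Equiv.symm_apply_apply] at h2
  exact congrArg Subtype.val h2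

lemma invol_apply {α : Type*} {σ : Perm α} (h : σ * σ = 1) (x : α) : σ (σ x) = x := by
  have := congrFun (congrArg (fun f : Perm α => f.toFun) h) x
  simpa using this

lemma fixed_empty {n : ℕ} (σ : Perm (Fin n))
    (h : Nat.card {x : Fin n // σ x = x} = 0) : ∀ x, σ x ≠ x := by
  intro x hx
  rw [Nat.card_eq_fintype_card, Fintype.card_eq_zero_iff] at h
  exact h.elim ⟨x, hx⟩

lemma fwd_invariant {n : ℕ} {σ : Perm (Fin n)} (hσ : σ * σ = 1) {S : Finset (Fin n)}
    (hfwd : ∀ y ∈ S, σ y ∈ S) : ∀ y, y ∈ S ↔ σ y ∈ S := by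
  intro y
  refine ⟨hfwd y, fun h => ?_⟩
  have := hfwd (σ y) h
  rwa [invol_apply hσ] at this

lemma even_add_two_iff (m : ℕ) : Even (m + 2) ↔ Even m := by
  constructor
  · rintro ⟨r, hr⟩; exact ⟨r - 1, by omega⟩
  · rintro ⟨r, hr⟩; exact ⟨r + 1, by omega⟩

end Core

section Down

def x0 (m : ℕ) : Fin (m + 2) := ⟨m + 1, by omega⟩

lemma pairCompl_card (m : ℕ) (y : Fin (m + 2)) (hy : y ≠ x0 m) :
    (({x0 m, y} : Finset (Fin (m + 2)))ᶜ).card = m := by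
  rw [Finset.card_compl, Finset.card_insert_of_notMem (by simp [Ne.symm hy]),
    Finset.card_singleton]
  simp

noncomputable def buildPerm (m : ℕ) (y : Fin (m + 2)) (hy : y ≠ x0 m)
    (τ : Equiv.Perm (Fin m)) : Equiv.Perm (Fin (m + 2)) :=
  Equiv.swap (x0 m) y *
    τ.extendDomain (Finset.equivFinOfCardEq (pairCompl_card m y hy)).symm

variable {m : ℕ} {y : Fin (m + 2)} (hy : y ≠ x0 m) (τ : Equiv.Perm (Fin m))

lemma ext_fix (z : Fin (m + 2)) (hz : z ∉ (({x0 m, y} : Finset (Fin (m + 2)))ᶜ)) :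
    τ.extendDomain (Finset.equivFinOfCardEq (pairCompl_card m y hy)).symm z = z :=
  Equiv.Perm.extendDomain_apply_not_subtype τ _ hz

lemma ext_mem (z : Fin (m + 2)) (hz : z ∈ (({x0 m, y} : Finset (Fin (m + 2)))ᶜ)) :
    τ.extendDomain (Finset.equivFinOfCardEq (pairCompl_card m y hy)).symm z ∈
      (({x0 m, y} : Finset (Fin (m + 2)))ᶜ) := by
  rw [Equiv.Perm.extendDomain_apply_subtype τ _ hz]
  exact (((Finset.equivFinOfCardEq (pairCompl_card m y hy)).symm) _).2

lemma buildPerm_x0 : buildPerm m y hy τ (x0 m) = y := by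
  have h1 : x0 m ∉ (({x0 m, y} : Finset (Fin (m + 2)))ᶜ) := by simp
  simp only [buildPerm, Equiv.Perm.mul_apply]
  rw [ext_fix hy τ _ h1, Equiv.swap_apply_left]

lemma buildPerm_sq (hτ : τ * τ = 1) : buildPerm m y hy τ * buildPerm m y hy τ = 1 := by
  have hcomm : Commute (Equiv.swap (x0 m) y)
      (τ.extendDomain (Finset.equivFinOfCardEq (pairCompl_card m y hy)).symm) := by
    apply Equiv.Perm.Disjoint.commute
    intro z
    by_cases hz : z ∈ (({x0 m, y} : Finset (Fin (m + 2)))ᶜ)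
    · left
      simp only [Finset.mem_compl, Finset.mem_insert, Finset.mem_singleton] at hz
      push_neg at hz
      exact Equiv.swap_apply_of_ne_of_ne hz.1 hz.2
    · right; exact ext_fix hy τ z hz
  unfold buildPerm
  rw [mul_assoc, ← mul_assoc _ (Equiv.swap (x0 m) y), ← hcomm.eq, mul_assoc, ← mul_assoc,
    Equiv.swap_mul_self, one_mul, Equiv.Perm.extendDomain_mul, hτ,
    Equiv.Perm.extendDomain_one]

lemma buildPerm_fixed_card :
    Nat.card {z : Fin (m + 2) // buildPerm m y hy τ z = z} =
      Nat.card {x : Fin m // τ x = x} := by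
  set S : Finset (Fin (m + 2)) := ({x0 m, y} : Finset (Fin (m + 2)))ᶜ with hS
  set f : Fin m ≃ {z // z ∈ S} := (Finset.equivFinOfCardEq (pairCompl_card m y hy)).symm
    with hf
  have hval : ∀ z : Fin (m + 2), buildPerm m y hy τ z =
      Equiv.swap (x0 m) y (τ.extendDomain f z) := fun z => rfl
  have hx0S : x0 m ∉ S := by simp [hS]
  have hyS : y ∉ S := by simp [hS]
  have hiff : ∀ (z : Fin (m + 2)) (hz : z ∈ S),
      (buildPerm m y hy τ z = z ↔ τ (f.symm ⟨z, hz⟩) = f.symm ⟨z, hz⟩) := by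
    intro z hz
    rw [hval]
    have hES : τ.extendDomain f z ∈ S := ext_mem hy τ z hz
    have h1 : τ.extendDomain f z ≠ x0 m := fun h => hx0S (h ▸ hES)
    have h2 : τ.extendDomain f z ≠ y := fun h => hyS (h ▸ hES)
    rw [Equiv.swap_apply_of_ne_of_ne h1 h2, Equiv.Perm.extendDomain_apply_subtype τ f hz]
    constructor
    · intro h
      have h3 : f (τ (f.symm ⟨z, hz⟩)) = ⟨z, hz⟩ := Subtype.ext h
      have := congrArg f.symm h3
      simpa using this
    · intro h; rw [h]; simp
  refine Nat.card_congr ⟨fun z => ?_, fun x => ?_, ?_, ?_⟩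
  · have hzS : z.1 ∈ S := by
      by_contra hzS
      have hEz : τ.extendDomain f z.1 = z.1 := ext_fix hy τ z.1 hzS
      have hz2 := z.2
      rw [hval, hEz] at hz2
      have hz1 : z.1 = x0 m ∨ z.1 = y := by
        by_contra hcon
        push_neg at hcon
        exact hzS (by simp [hS, hcon.1, hcon.2])
      rcases hz1 with h | h
      · rw [h, Equiv.swap_apply_left] at hz2; exact (hy hz2).elim
      · rw [h, Equiv.swap_apply_right] at hz2; exact (hy hz2.symm).elim
    exact ⟨f.symm ⟨z.1, hzS⟩, (hiff z.1 hzS).mp z.2⟩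
  · refine ⟨(f x).1, ?_⟩
    have hzS := (f x).2
    rw [hiff (f x).1 hzS]
    have h4 : (⟨(f x).1, hzS⟩ : {z // z ∈ S}) = f x := rfl
    rw [h4]; simp [x.2]
  · intro z; ext; simp
  · intro x; ext; simp

lemma buildPerm_npm (hτ : IsNearPerfectMatching τ) :
    IsNearPerfectMatching (buildPerm m y hy τ) := by
  refine ⟨buildPerm_sq hy τ hτ.1, ?_⟩
  rw [buildPerm_fixed_card, hτ.2]
  simp [even_add_two_iff m]

lemma buildPerm_inj {τ τ' : Equiv.Perm (Fin m)}
    (h : buildPerm m y hy τ = buildPerm m y hy τ') : τ = τ' := by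
  have h2 : τ.extendDomain (Finset.equivFinOfCardEq (pairCompl_card m y hy)).symm =
      τ'.extendDomain (Finset.equivFinOfCardEq (pairCompl_card m y hy)).symm :=
    mul_left_cancel h
  set f := (Finset.equivFinOfCardEq (pairCompl_card m y hy)).symm
  apply Equiv.ext
  intro x
  have h1 := congrArg (fun ρ : Equiv.Perm (Fin (m + 2)) => ρ (f x).1) h2
  simp only [Equiv.Perm.extendDomain_apply_image] at h1
  have := congrArg f.symm (Subtype.ext h1 : f (τ x) = f (τ' x))
  simpa using this

end Down

lemma F_down (m : ℕ) : (m + 1) * F m ≤ F (m + 2) := by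
  classical
  have h1 : Nat.card ({y : Fin (m + 2) // y ≠ x0 m} ×
      {σ : Equiv.Perm (Fin m) // IsNearPerfectMatching σ}) ≤ F (m + 2) := by
    let Φ : ({y : Fin (m + 2) // y ≠ x0 m} ×
        {σ : Equiv.Perm (Fin m) // IsNearPerfectMatching σ}) →
        {σ : Equiv.Perm (Fin (m + 2)) // IsNearPerfectMatching σ} :=
      fun p => ⟨buildPerm m p.1.1 p.1.2 p.2.1, buildPerm_npm p.1.2 p.2.1 p.2.2⟩
    refine Nat.card_le_card_of_injective Φ ?_
    rintro ⟨y, τ⟩ ⟨y', τ'⟩ hEq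
    have hEq' : buildPerm m y.1 y.2 τ.1 = buildPerm m y'.1 y'.2 τ'.1 :=
      congrArg Subtype.val hEq
    have hy : y = y' := by
      have ha := buildPerm_x0 y.2 τ.1
      have hb := buildPerm_x0 y'.2 τ'.1
      exact Subtype.ext (by rw [← ha, ← hb, hEq'])
    obtain ⟨y, hyne⟩ := y
    obtain ⟨y', hyne'⟩ := y'
    obtain rfl : y = y' := congrArg Subtype.val hy
    have : τ.1 = τ'.1 := buildPerm_inj hyne hEq'
    simp [Prod.ext_iff, Subtype.ext_iff, this]
  calc (m + 1) * F m
      = Nat.card {y : Fin (m + 2) // y ≠ x0 m} * F m := by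
        rw [Nat.card_eq_fintype_card, Fintype.card_subtype_compl]
        simp
    _ = Nat.card ({y : Fin (m + 2) // y ≠ x0 m} ×
        {σ : Equiv.Perm (Fin m) // IsNearPerfectMatching σ}) := by
        rw [Nat.card_prod]; rfl
    _ ≤ F (m + 2) := h1

section Up

variable {m : ℕ} (σ : Equiv.Perm (Fin (m + 2)))

lemma up_inv (hσ1 : σ * σ = 1) (h0 : ∀ x, σ x ≠ x) :
    ∀ x, x ∈ (({x0 m, σ (x0 m)} : Finset (Fin (m + 2)))ᶜ) ↔
      σ x ∈ (({x0 m, σ (x0 m)} : Finset (Fin (m + 2)))ᶜ) := by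
  apply fwd_invariant hσ1
  intro z hz
  simp only [Finset.mem_compl, Finset.mem_insert, Finset.mem_singleton] at hz ⊢
  push_neg at hz ⊢
  constructor
  · intro h
    exact hz.2 ((invol_apply hσ1 z).symm.trans (congrArg σ h))
  · intro h
    exact hz.1 (σ.injective h)

noncomputable def upRestr (hσ1 : σ * σ = 1) (h0 : ∀ x, σ x ≠ x) : Equiv.Perm (Fin m) :=
  npmRestr _ (pairCompl_card m (σ (x0 m)) (h0 (x0 m))) σ (up_inv σ hσ1 h0)

lemma upRestr_npm (hm : Even m) (hσ1 : σ * σ = 1) (h0 : ∀ x, σ x ≠ x) :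
    IsNearPerfectMatching (upRestr σ hσ1 h0) := by
  refine ⟨npmRestr_invol _ _ _ _ hσ1, ?_⟩
  rw [upRestr, card_fixed_npmRestr]
  have hempty : IsEmpty {x : Fin (m + 2) //
      x ∈ (({x0 m, σ (x0 m)} : Finset (Fin (m + 2)))ᶜ) ∧ σ x = x} :=
    ⟨fun x => h0 x.1 x.2.2⟩
  rw [@Nat.card_of_isEmpty _ hempty, if_pos hm]

lemma npm_fpf (hm : Even m) (hp : IsNearPerfectMatching σ) : ∀ x, σ x ≠ x := by
  apply fixed_empty
  rw [hp.2, if_pos ((even_add_two_iff m).mpr hm)]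

end Up

lemma F_up (m : ℕ) (hm : Even m) : F (m + 2) ≤ (m + 1) * F m := by
  classical
  have h1 : F (m + 2) ≤ Nat.card ({y : Fin (m + 2) // y ≠ x0 m} ×
      {σ : Equiv.Perm (Fin m) // IsNearPerfectMatching σ}) := by
    let Θ : {σ : Equiv.Perm (Fin (m + 2)) // IsNearPerfectMatching σ} →
        ({y : Fin (m + 2) // y ≠ x0 m} ×
          {σ : Equiv.Perm (Fin m) // IsNearPerfectMatching σ}) :=
      fun p => (⟨p.1 (x0 m), npm_fpf p.1 hm p.2 (x0 m)⟩,
        ⟨upRestr p.1 p.2.1 (npm_fpf p.1 hm p.2),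
          upRestr_npm p.1 hm p.2.1 (npm_fpf p.1 hm p.2)⟩)
    refine Nat.card_le_card_of_injective Θ ?_
    rintro ⟨σ, hσ⟩ ⟨σ', hσ'⟩ hEq
    have h0 := npm_fpf σ hm hσ
    have h0' := npm_fpf σ' hm hσ'
    have hfst : σ (x0 m) = σ' (x0 m) :=
      congrArg Subtype.val (congrArg Prod.fst hEq)
    have hsnd : upRestr σ hσ.1 h0 = upRestr σ' hσ'.1 h0' :=
      congrArg Subtype.val (congrArg Prod.snd hEq)
    have hST : (({x0 m, σ (x0 m)} : Finset (Fin (m + 2)))ᶜ) =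
        (({x0 m, σ' (x0 m)} : Finset (Fin (m + 2)))ᶜ) := by rw [hfst]
    have hOnS := npmRestr_inj hST _ _ _ _ hsnd
    apply Subtype.ext
    apply Equiv.ext
    intro x
    by_cases hx : x ∈ (({x0 m, σ (x0 m)} : Finset (Fin (m + 2)))ᶜ)
    · exact hOnS x hx
    · have hx' : x = x0 m ∨ x = σ (x0 m) := by
        by_contra hcon
        push_neg at hcon
        exact hx (by simp [hcon.1, hcon.2])
      rcases hx' with rfl | rfl
      · exact hfst
      · rw [invol_apply hσ.1, hfst, invol_apply hσ'.1]
  calc F (m + 2) ≤ Nat.card ({y : Fin (m + 2) // y ≠ x0 m} ×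
      {σ : Equiv.Perm (Fin m) // IsNearPerfectMatching σ}) := h1
    _ = (m + 1) * F m := by
        rw [Nat.card_prod, Nat.card_eq_fintype_card, Fintype.card_subtype_compl]
        simp [F]

lemma F_zero : F 0 ≤ 1 := by
  have h : Nat.card {σ : Equiv.Perm (Fin 0) // IsNearPerfectMatching σ} ≤
      Nat.card (Equiv.Perm (Fin 0)) :=
    Nat.card_le_card_of_injective Subtype.val Subtype.val_injective
  have h2 : Nat.card (Equiv.Perm (Fin 0)) = 1 := by
    rw [Nat.card_eq_fintype_card, Fintype.card_perm]
    simp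
  unfold F
  omega

lemma exists_invariant_subset {n : ℕ} (σ : Perm (Fin n)) (hσ : σ * σ = 1)
    (T : Finset (Fin n)) (hT : ∀ x, x ∈ T ↔ σ x ∈ T) (hfpf : ∀ x ∈ T, σ x ≠ x)
    (k : ℕ) (hk : 2 * k ≤ T.card) :
    ∃ S ⊆ T, S.card = 2 * k ∧ (∀ x, x ∈ S ↔ σ x ∈ S) ∧ (∀ x ∈ S, σ x ≠ x) := by
  classical
  induction k generalizing T with
  | zero => exact ⟨∅, Finset.empty_subset _, by simp, by simp, by simp⟩
  | succ k ih =>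
    have hne : T.Nonempty := Finset.card_pos.mp (by omega)
    obtain ⟨x, hx⟩ := hne
    have hσx : σ x ∈ T := (hT x).mp hx
    have hxne : σ x ≠ x := hfpf x hx
    set T' : Finset (Fin n) := T \ {x, σ x} with hT'def
    have hpair : ({x, σ x} : Finset (Fin n)) ⊆ T := by
      intro z hz
      simp only [Finset.mem_insert, Finset.mem_singleton] at hz
      rcases hz with rfl | rfl
      · exact hx
      · exact hσx
    have hpaircard : ({x, σ x} : Finset (Fin n)).card = 2 := by
      rw [Finset.card_insert_of_notMem (by simp [Ne.symm hxne]), Finset.card_singleton]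
    have hT'card : T'.card = T.card - 2 := by
      rw [hT'def, Finset.card_sdiff_of_subset hpair, hpaircard]
    have hT'inv : ∀ z, z ∈ T' ↔ σ z ∈ T' := by
      refine fwd_invariant hσ ?_
      intro z hz
      rw [hT'def, Finset.mem_sdiff] at hz ⊢
      obtain ⟨hzT, hzp⟩ := hz
      simp only [Finset.mem_insert, Finset.mem_singleton] at hzp ⊢
      push_neg at hzp ⊢
      refine ⟨(hT z).mp hzT, ?_, fun h => hzp.1 (σ.injective h)⟩
      intro h
      apply hzp.2
      exact (invol_apply hσ z).symm.trans (congrArg σ h)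
    have hT'fpf : ∀ z ∈ T', σ z ≠ z := fun z hz =>
      hfpf z (Finset.mem_sdiff.mp (hT'def ▸ hz)).1
    obtain ⟨S', hS'sub, hS'card, hS'inv, hS'fpf⟩ := ih T' hT'inv hT'fpf (by omega)
    have hxS' : x ∉ S' := fun h => by
      have := hS'sub h
      rw [hT'def, Finset.mem_sdiff] at this
      exact this.2 (by simp)
    have hσxS' : σ x ∉ S' := fun h => by
      have := hS'sub h
      rw [hT'def, Finset.mem_sdiff] at this
      exact this.2 (by simp)
    refine ⟨insert x (insert (σ x) S'), ?_, ?_, ?_, ?_⟩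
    · intro z hz
      simp only [Finset.mem_insert] at hz
      rcases hz with rfl | rfl | hz
      · exact hx
      · exact hσx
      · exact (Finset.mem_sdiff.mp (hT'def ▸ hS'sub hz)).1
    · rw [Finset.card_insert_of_notMem (by simp [hxS', Ne.symm hxne]),
        Finset.card_insert_of_notMem hσxS', hS'card]
      ring
    · refine fwd_invariant hσ ?_
      intro z hz
      simp only [Finset.mem_insert] at hz ⊢
      rcases hz with rfl | rfl | hz
      · right; left; rfl
      · left; exact invol_apply hσ x
      · right; right; exact (hS'inv z).mp hz
    · intro z hz
      simp only [Finset.mem_insert] at hz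
      rcases hz with rfl | rfl | hz
      · exact hxne
      · rw [invol_apply hσ]; exact fun h => hxne h.symm
      · exact hS'fpf z hz

lemma exists_good_subset {n : ℕ} (W W' : Finset (Fin n)) (hWW' : W ⊆ W')
    (σ : Perm (Fin n)) (hσ : IsNearPerfectMatching σ) (him : W.image σ ⊆ W') :
    ∃ S ∈ W.powersetCard (2 * ((2 * W.card - W'.card - 1) / 2)),
      (∀ x, x ∈ S ↔ σ x ∈ S) ∧ ∀ x ∈ S, σ x ≠ x := by
  classical
  obtain ⟨hσ1, hσ2⟩ := hσ
  set T : Finset (Fin n) := W.filter (fun x => σ x ∈ W ∧ σ x ≠ x) with hTdef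
  have hTinv : ∀ z, z ∈ T ↔ σ z ∈ T := by
    apply fwd_invariant hσ1
    intro z hz
    rw [hTdef, Finset.mem_filter] at hz ⊢
    obtain ⟨hzW, hzW2, hzne⟩ := hz
    refine ⟨hzW2, ?_, ?_⟩
    · rw [invol_apply hσ1]; exact hzW
    · rw [invol_apply hσ1]; exact fun h => hzne h.symm
  have hTfpf : ∀ z ∈ T, σ z ≠ z := by
    intro z hz
    exact ((Finset.mem_filter.mp hz).2).2
  -- cardinality bound
  have hw'w : W.card ≤ W'.card := Finset.card_le_card hWW'
  set A : Finset (Fin n) := W.filter (fun x => σ x ∉ W) with hAdef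
  set B : Finset (Fin n) := W.filter (fun x => σ x = x) with hBdef
  have hcover : W ⊆ T ∪ A ∪ B := by
    intro x hx
    simp only [Finset.mem_union, hTdef, hAdef, hBdef, Finset.mem_filter]
    by_cases h1 : σ x = x
    · right; exact ⟨hx, h1⟩
    · by_cases h2 : σ x ∈ W
      · left; left; exact ⟨hx, h2, h1⟩
      · left; right; exact ⟨hx, h2⟩
  have hWle : W.card ≤ T.card + A.card + B.card := by
    calc W.card ≤ (T ∪ A ∪ B).card := Finset.card_le_card hcover
      _ ≤ (T ∪ A).card + B.card := Finset.card_union_le _ _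
      _ ≤ T.card + A.card + B.card := by
          have := Finset.card_union_le T A
          omega
  have hA : A.card ≤ W'.card - W.card := by
    have h1 : A.card ≤ (W' \ W).card := by
      apply Finset.card_le_card_of_injOn σ
      · intro a ha
        rw [hAdef, Finset.mem_coe, Finset.mem_filter] at ha
        rw [Finset.mem_coe, Finset.mem_sdiff]
        exact ⟨him (Finset.mem_image_of_mem σ ha.1), ha.2⟩
      · exact σ.injective.injOn
    rwa [Finset.card_sdiff_of_subset hWW'] at h1
  have hB : B.card ≤ 1 := by
    have h1 : B.card ≤ (Finset.univ.filter (fun x => σ x = x)).card := by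
      apply Finset.card_le_card
      intro x hx
      rw [hBdef, Finset.mem_filter] at hx
      simp [hx.2]
    have h2 : (Finset.univ.filter (fun x => σ x = x)).card =
        Nat.card {x : Fin n // σ x = x} := by
      rw [Nat.card_eq_fintype_card, Fintype.card_subtype]
    have h3 : Nat.card {x : Fin n // σ x = x} ≤ 1 := by
      rw [hσ2]
      split <;> omega
    omega
  have hk : 2 * ((2 * W.card - W'.card - 1) / 2) ≤ T.card := by omega
  obtain ⟨S, hSsub, hScard, hSinv, hSfpf⟩ :=
    exists_invariant_subset σ hσ1 T hTinv hTfpf ((2 * W.card - W'.card - 1) / 2) hk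
  refine ⟨S, Finset.mem_powersetCard.mpr ⟨?_, hScard⟩, hSinv, hSfpf⟩
  exact hSsub.trans (Finset.filter_subset _ _)

lemma compl_inv {n : ℕ} {σ : Perm (Fin n)} {S : Finset (Fin n)}
    (hinv : ∀ x, x ∈ S ↔ σ x ∈ S) : ∀ x, x ∈ Sᶜ ↔ σ x ∈ Sᶜ := by
  intro x
  rw [Finset.mem_compl, Finset.mem_compl]
  exact not_iff_not.mpr (hinv x)

lemma restrS_npm {n s : ℕ} (S : Finset (Fin n)) (hc : S.card = s) (hs : Even s)
    {σ : Perm (Fin n)} (hσ1 : σ * σ = 1) (hinv : ∀ x, x ∈ S ↔ σ x ∈ S)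
    (hfpf : ∀ x ∈ S, σ x ≠ x) : IsNearPerfectMatching (npmRestr S hc σ hinv) := by
  refine ⟨npmRestr_invol _ _ _ _ hσ1, ?_⟩
  rw [card_fixed_npmRestr]
  have hempty : IsEmpty {x : Fin n // x ∈ S ∧ σ x = x} :=
    ⟨fun x => hfpf x.1 x.2.1 x.2.2⟩
  rw [@Nat.card_of_isEmpty _ hempty, if_pos hs]

lemma restrC_npm {n s : ℕ} (S : Finset (Fin n)) (hcc : Sᶜ.card = n - s) (hs : Even s)
    (hsn : s ≤ n) {σ : Perm (Fin n)} (hσ : IsNearPerfectMatching σ)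
    (hinv : ∀ x, x ∈ S ↔ σ x ∈ S) (hfpf : ∀ x ∈ S, σ x ≠ x) :
    IsNearPerfectMatching (npmRestr Sᶜ hcc σ (compl_inv hinv)) := by
  refine ⟨npmRestr_invol _ _ _ _ hσ.1, ?_⟩
  rw [card_fixed_npmRestr]
  have h1 : Nat.card {x : Fin n // x ∈ Sᶜ ∧ σ x = x} = Nat.card {x : Fin n // σ x = x} := by
    apply Nat.card_congr
    apply Equiv.subtypeEquivRight
    intro x
    constructor
    · exact fun h => h.2
    · intro h
      refine ⟨Finset.mem_compl.mpr (fun hxS => hfpf x hxS h), h⟩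
  rw [h1, hσ.2]
  have hpar : Even (n - s) ↔ Even n := by
    rw [Nat.even_sub hsn]
    simp [hs]
  simp only [hpar]

lemma count_main {n s : ℕ} (hs : Even s) (W W' : Finset (Fin n))
    (hex : ∀ σ : Perm (Fin n), IsNearPerfectMatching σ → W.image σ ⊆ W' →
      ∃ S ∈ W.powersetCard s, (∀ x, x ∈ S ↔ σ x ∈ S) ∧ ∀ x ∈ S, σ x ≠ x) :
    Nat.card {σ : Perm (Fin n) // IsNearPerfectMatching σ ∧ W.image σ ⊆ W'} ≤
      W.card.choose s * (F s * F (n - s)) := by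
  classical
  choose Sfun hmem hinv hfpf using hex
  have hc : ∀ (σ : Perm (Fin n)) (h1 : IsNearPerfectMatching σ) (h2 : W.image σ ⊆ W'),
      (Sfun σ h1 h2).card = s := fun σ h1 h2 =>
    (Finset.mem_powersetCard.mp (hmem σ h1 h2)).2
  have hcc : ∀ (σ : Perm (Fin n)) (h1 : IsNearPerfectMatching σ) (h2 : W.image σ ⊆ W'),
      ((Sfun σ h1 h2)ᶜ).card = n - s := by
    intro σ h1 h2
    rw [Finset.card_compl, hc σ h1 h2]
    simp
  have hsn : ∀ (σ : Perm (Fin n)) (h1 : IsNearPerfectMatching σ) (h2 : W.image σ ⊆ W'),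
      s ≤ n := by
    intro σ h1 h2
    rw [← hc σ h1 h2]
    simpa using Finset.card_le_univ (Sfun σ h1 h2)
  have hmain : Nat.card {σ : Perm (Fin n) // IsNearPerfectMatching σ ∧ W.image σ ⊆ W'} ≤
      Nat.card (↥(W.powersetCard s) ×
        {σ : Perm (Fin s) // IsNearPerfectMatching σ} ×
        {σ : Perm (Fin (n - s)) // IsNearPerfectMatching σ}) := by
    let Φ : {σ : Perm (Fin n) // IsNearPerfectMatching σ ∧ W.image σ ⊆ W'} →
        (↥(W.powersetCard s) ×
          {σ : Perm (Fin s) // IsNearPerfectMatching σ} ×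
          {σ : Perm (Fin (n - s)) // IsNearPerfectMatching σ}) :=
      fun p => (⟨Sfun p.1 p.2.1 p.2.2, hmem p.1 p.2.1 p.2.2⟩,
        ⟨npmRestr _ (hc p.1 p.2.1 p.2.2) p.1 (hinv p.1 p.2.1 p.2.2),
          restrS_npm _ _ hs p.2.1.1 (hinv p.1 p.2.1 p.2.2) (hfpf p.1 p.2.1 p.2.2)⟩,
        ⟨npmRestr _ (hcc p.1 p.2.1 p.2.2) p.1 (compl_inv (hinv p.1 p.2.1 p.2.2)),
          restrC_npm _ _ hs (hsn p.1 p.2.1 p.2.2) p.2.1 (hinv p.1 p.2.1 p.2.2) (hfpf p.1 p.2.1 p.2.2)⟩)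
    refine Nat.card_le_card_of_injective Φ ?_
    rintro ⟨σ, h1, h2⟩ ⟨σ', h1', h2'⟩ hEq
    have hS : Sfun σ h1 h2 = Sfun σ' h1' h2' :=
      congrArg Subtype.val (congrArg Prod.fst hEq)
    have hS2 : npmRestr _ (hc σ h1 h2) σ (hinv σ h1 h2) =
        npmRestr _ (hc σ' h1' h2') σ' (hinv σ' h1' h2') :=
      congrArg Subtype.val (congrArg Prod.fst (congrArg Prod.snd hEq))
    have hS3 : npmRestr _ (hcc σ h1 h2) σ (compl_inv (hinv σ h1 h2)) =
        npmRestr _ (hcc σ' h1' h2') σ' (compl_inv (hinv σ' h1' h2')) :=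
      congrArg Subtype.val (congrArg Prod.snd (congrArg Prod.snd hEq))
    have hOn : ∀ x ∈ Sfun σ h1 h2, σ x = σ' x := npmRestr_inj hS _ _ _ _ hS2
    have hOff : ∀ x ∈ (Sfun σ h1 h2)ᶜ, σ x = σ' x :=
      npmRestr_inj (by rw [hS]) _ _ _ _ hS3
    apply Subtype.ext
    apply Equiv.ext
    intro x
    by_cases hx : x ∈ Sfun σ h1 h2
    · exact hOn x hx
    · exact hOff x (Finset.mem_compl.mpr hx)
  calc Nat.card {σ : Perm (Fin n) // IsNearPerfectMatching σ ∧ W.image σ ⊆ W'}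
      ≤ Nat.card (↥(W.powersetCard s) ×
        {σ : Perm (Fin s) // IsNearPerfectMatching σ} ×
        {σ : Perm (Fin (n - s)) // IsNearPerfectMatching σ}) := hmain
    _ = W.card.choose s * (F s * F (n - s)) := by
        rw [Nat.card_prod, Nat.card_prod]
        congr 1
        rw [Nat.card_eq_fintype_card, Fintype.card_coe, Finset.card_powersetCard]

lemma F_ge (m k : ℕ) : F m * ∏ i ∈ Finset.range k, (m + 2 * k - (2 * i + 1)) ≤ F (m + 2 * k) := by
  induction k with
  | zero => simp
  | succ k ih =>
    have hprod : ∏ i ∈ Finset.range (k + 1), (m + 2 * (k + 1) - (2 * i + 1)) =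
        (∏ i ∈ Finset.range k, (m + 2 * k - (2 * i + 1))) * (m + 2 * k + 1) := by
      rw [Finset.prod_range_succ']
      exact congrArg₂ (· * ·) (Finset.prod_congr rfl fun i _ => by omega) (by omega)
    have h2 : m + 2 * (k + 1) = (m + 2 * k) + 2 := by ring
    rw [hprod, h2]
    calc F m * ((∏ i ∈ Finset.range k, (m + 2 * k - (2 * i + 1))) * (m + 2 * k + 1))
        = (m + 2 * k + 1) * (F m * ∏ i ∈ Finset.range k, (m + 2 * k - (2 * i + 1))) := by
          ring
      _ ≤ (m + 2 * k + 1) * F (m + 2 * k) := Nat.mul_le_mul_left _ ih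
      _ ≤ F (m + 2 * k + 2) := F_down (m + 2 * k)

lemma F_le (k : ℕ) : F (2 * k) ≤ ∏ i ∈ Finset.range k, (2 * k - (2 * i + 1)) := by
  induction k with
  | zero => simpa using F_zero
  | succ k ih =>
    have hprod : ∏ i ∈ Finset.range (k + 1), (2 * (k + 1) - (2 * i + 1)) =
        (∏ i ∈ Finset.range k, (2 * k - (2 * i + 1))) * (2 * k + 1) := by
      rw [Finset.prod_range_succ']
      exact congrArg₂ (· * ·) (Finset.prod_congr rfl fun i _ => by omega) (by omega)
    have h2 : 2 * (k + 1) = (2 * k) + 2 := by ring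
    rw [hprod, h2]
    calc F (2 * k + 2) ≤ (2 * k + 1) * F (2 * k) := F_up (2 * k) ⟨k, by ring⟩
      _ ≤ (2 * k + 1) * ∏ i ∈ Finset.range k, (2 * k - (2 * i + 1)) :=
          Nat.mul_le_mul_left _ ih
      _ = _ := by ring

theorem matching_probability_bound
    (n : ℕ) (W W' : Finset (Fin n)) (hWW' : W ⊆ W') :
    (Nat.card {σ : Equiv.Perm (Fin n) //
          IsNearPerfectMatching σ ∧ W.image σ ⊆ W'} : ℚ) *
        oddBinom n (2 * ((2 * W.card - W'.card - 1) / 2)) ≤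
      (Nat.card {σ : Equiv.Perm (Fin n) // IsNearPerfectMatching σ} : ℚ) *
        (W.card.choose (2 * ((2 * W.card - W'.card - 1) / 2)) : ℚ) := by
  classical
  set k : ℕ := (2 * W.card - W'.card - 1) / 2 with hkdef
  have hw'w : W.card ≤ W'.card := Finset.card_le_card hWW'
  have hwn : W.card ≤ n := by simpa using Finset.card_le_univ W
  have hsn : 2 * k ≤ n := by omega
  -- counting bound
  have hcount : Nat.card {σ : Equiv.Perm (Fin n) //
      IsNearPerfectMatching σ ∧ W.image σ ⊆ W'} ≤
      W.card.choose (2 * k) * (F (2 * k) * F (n - 2 * k)) := by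
    apply count_main ⟨k, by ring⟩ W W'
    intro σ h1 h2
    exact exists_good_subset W W' hWW' σ h1 h2
  set Ps : ℕ := ∏ i ∈ Finset.range k, (2 * k - (2 * i + 1)) with hPsdef
  set Pn : ℕ := ∏ i ∈ Finset.range k, (n - (2 * i + 1)) with hPndef
  have hFle : F (2 * k) ≤ Ps := F_le k
  have hFge : F (n - 2 * k) * Pn ≤ F n := by
    have h1 := F_ge (n - 2 * k) k
    have h2 : n - 2 * k + 2 * k = n := by omega
    have h3 : ∏ i ∈ Finset.range k, (n - 2 * k + 2 * k - (2 * i + 1)) = Pn := by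
      rw [hPndef]
      exact Finset.prod_congr rfl fun i _ => by omega
    rwa [h2, ← hPndef] at h1
  have hNat : Nat.card {σ : Equiv.Perm (Fin n) //
      IsNearPerfectMatching σ ∧ W.image σ ⊆ W'} * Pn ≤
      F n * W.card.choose (2 * k) * Ps := by
    calc Nat.card {σ : Equiv.Perm (Fin n) //
          IsNearPerfectMatching σ ∧ W.image σ ⊆ W'} * Pn
        ≤ W.card.choose (2 * k) * (F (2 * k) * F (n - 2 * k)) * Pn :=
          Nat.mul_le_mul_right _ hcount
      _ = W.card.choose (2 * k) * F (2 * k) * (F (n - 2 * k) * Pn) := by ring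
      _ ≤ W.card.choose (2 * k) * F (2 * k) * F n :=
          Nat.mul_le_mul_left _ hFge
      _ ≤ W.card.choose (2 * k) * Ps * F n :=
          Nat.mul_le_mul_right _ (Nat.mul_le_mul_left _ hFle)
      _ = F n * W.card.choose (2 * k) * Ps := by ring
  -- cast to ℚ
  have hs2 : (2 * ((2 * W.card - W'.card - 1) / 2)) / 2 = k := by omega
  have hseq : 2 * ((2 * W.card - W'.card - 1) / 2) = 2 * k := rfl
  have hPs_cast : (∏ i ∈ Finset.range ((2 * ((2 * W.card - W'.card - 1) / 2)) / 2),
      (((2 * ((2 * W.card - W'.card - 1) / 2) : ℕ) : ℚ) - (2 * i + 1))) = (Ps : ℚ) := by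
    rw [hs2, hPsdef, Nat.cast_prod]
    refine Finset.prod_congr rfl fun i hi => ?_
    rw [Finset.mem_range] at hi
    have h5 : 2 * i + 1 ≤ 2 * k := by omega
    rw [hseq, Nat.cast_sub h5]
    push_cast
    ring
  have hPn_cast : (∏ i ∈ Finset.range ((2 * ((2 * W.card - W'.card - 1) / 2)) / 2),
      ((n : ℚ) - (2 * i + 1))) = (Pn : ℚ) := by
    rw [hs2, hPndef, Nat.cast_prod]
    refine Finset.prod_congr rfl fun i hi => ?_
    rw [Finset.mem_range] at hi
    have h5 : 2 * i + 1 ≤ n := by omega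
    rw [Nat.cast_sub h5]
    push_cast
    ring
  have hPs_posN : 0 < Ps := by
    rw [hPsdef]
    apply Finset.prod_pos
    intro i hi
    rw [Finset.mem_range] at hi
    omega
  have hPs_pos : (0 : ℚ) < (Ps : ℚ) := by exact_mod_cast hPs_posN
  rw [oddBinom, hPs_cast, hPn_cast]
  rw [show Nat.card {σ : Equiv.Perm (Fin n) // IsNearPerfectMatching σ} = F n from rfl]
  rw [hseq, ← mul_div_assoc, div_le_iff₀ hPs_pos]
  have hNat' : Nat.card {σ : Equiv.Perm (Fin n) //
      IsNearPerfectMatching σ ∧ W.image σ ⊆ W'} * Pn ≤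
      F n * W.card.choose (2 * k) * Ps := hNat
  exact_mod_cast hNat'
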